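/- Let G be a finite graph that is K_3-free, (K_1+2K_2)-free, and (K_1+C_5)-free, and let I be a maximal independent set of G. Then every induced 5-cycle of G intersects I. -/

import Mathlib

/-- The 5-cycle `C₅`. -/
def C5 : SimpleGraph (ZMod 5) :=
  SimpleGraph.fromRel (fun i j => j = i + 1)

/-- The graph `K₁ + 2K₂`: vertex 0 is isolated, with edges 1-2 and 3-4. -/
def K1plus2K2 : SimpleGraph (Fin 5) :=
  SimpleGraph.fromRel (fun i j => (i = 1 ∧ j = 2) ∨ (i = 3 ∧ j = 4))

/-- The graph `K₁ + C₅`: vertex 0 is isolated and 1,2,3,4,5 form a 5-cycle. -/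
def K1plusC5 : SimpleGraph (Fin 6) :=
  SimpleGraph.fromRel (fun i j =>
    (i = 1 ∧ j = 2) ∨ (i = 2 ∧ j = 3) ∨ (i = 3 ∧ j = 4) ∨ (i = 4 ∧ j = 5) ∨ (i = 5 ∧ j = 1))

/-- `I` is an independent set of vertices of `G`. -/
def IsIndep {V : Type*} (G : SimpleGraph V) (I : Set V) : Prop :=
  ∀ x ∈ I, ∀ y ∈ I, ¬ G.Adj x y

/-- Auxiliary: if `G` contains an induced `K₁+2K₂` pattern `d; a-p; b-q`, then
`K1plus2K2` embeds into `G`. -/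
lemma build_K1plus2K2 {V : Type*} (G : SimpleGraph V) (d a p b q : V)
    (hap : G.Adj a p) (hbq : G.Adj b q)
    (hda : d ≠ a) (hdp : d ≠ p) (hdb : d ≠ b) (hdq : d ≠ q)
    (hab : a ≠ b) (haq : a ≠ q) (hpb : p ≠ b) (hpq : p ≠ q)
    (nda : ¬ G.Adj d a) (ndp : ¬ G.Adj d p) (ndb : ¬ G.Adj d b) (ndq : ¬ G.Adj d q)
    (nab : ¬ G.Adj a b) (naq : ¬ G.Adj a q) (npb : ¬ G.Adj p b) (npq : ¬ G.Adj p q) :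
    Nonempty (K1plus2K2 ↪g G) := by
  have hpa : p ≠ a := (G.ne_of_adj hap).symm
  have hqb : q ≠ b := (G.ne_of_adj hbq).symm
  have nad : ¬ G.Adj a d := fun h => nda h.symm
  have npd : ¬ G.Adj p d := fun h => ndp h.symm
  have nbd : ¬ G.Adj b d := fun h => ndb h.symm
  have nqd : ¬ G.Adj q d := fun h => ndq h.symm
  have nba : ¬ G.Adj b a := fun h => nab h.symm
  have nqa : ¬ G.Adj q a := fun h => naq h.symm
  have nbp : ¬ G.Adj b p := fun h => npb h.symm
  have nqp : ¬ G.Adj q p := fun h => npq h.symm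
  refine ⟨⟨⟨![d,a,p,b,q], ?_⟩, ?_⟩⟩
  · intro i j hij
    fin_cases i <;> fin_cases j <;> simp_all
  · intro i j
    change G.Adj (![d,a,p,b,q] i) (![d,a,p,b,q] j) ↔ _
    fin_cases i <;> fin_cases j <;>
      simp_all [K1plus2K2, SimpleGraph.fromRel_adj, hap.symm, hbq.symm, G.irrefl]

/-- Every induced 5-cycle of `G` intersects the maximal independent set `I`. -/
theorem induced_C5_meets_maxIndep {V : Type*} [Fintype V] (G : SimpleGraph V) (I : Set V)
    (hK3 : G.CliqueFree 3)
    (hK1plus2K2 : ¬ Nonempty (K1plus2K2 ↪g G))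
    (hK1plusC5 : ¬ Nonempty (K1plusC5 ↪g G))
    (hind : IsIndep G I)
    (hmax : ∀ J : Set V, IsIndep G J → I ⊆ J → J = I) :
    ∀ f : C5 ↪g G, ∃ i : ZMod 5, f i ∈ I := by
  classical
  intro f
  by_contra hcon
  push_neg at hcon
  -- arithmetic facts in ZMod 5
  have ar1 : ∀ j : ZMod 5, j + 4 + 1 = j := by decide
  have ar2 : ∀ j : ZMod 5, j + 2 + 1 = j + 3 := by decide
  have ar3 : ∀ j : ZMod 5, j + 2 + 4 = j + 1 := by decide
  have ar4 : ∀ j : ZMod 5, j + 1 + 4 = j := by decide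
  have ar5 : ∀ j : ZMod 5, j + 1 + 1 = j + 2 := by decide
  have arne : ∀ j : ZMod 5, j ≠ j + 2 := by decide
  -- triangle-free
  have tri : ∀ x y z : V, G.Adj x y → G.Adj x z → G.Adj y z → False := by
    intro x y z hxy hxz hyz
    exact hK3 {x, y, z} (SimpleGraph.is3Clique_triple_iff.mpr ⟨hxy, hxz, hyz⟩)
  -- cycle adjacencies
  have fadj : ∀ i : ZMod 5, G.Adj (f i) (f (i+1)) := by
    intro i
    refine f.map_rel_iff.mpr ?_
    rw [C5, SimpleGraph.fromRel_adj]
    revert i; decide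
  have fnadj : ∀ i : ZMod 5, ¬ G.Adj (f i) (f (i+2)) := by
    have harith : ∀ i : ZMod 5, ¬ (i ≠ i+2 ∧ (i+2 = i+1 ∨ i = i+2+1)) := by decide
    intro i h
    have h2 := f.map_rel_iff.mp h
    rw [C5, SimpleGraph.fromRel_adj] at h2
    exact harith i h2
  -- every cycle vertex has a neighbour in I
  have hnex : ∀ i : ZMod 5, ∃ x, x ∈ I ∧ G.Adj x (f i) := by
    intro i
    by_contra hc
    push_neg at hc
    have hJ : IsIndep G (insert (f i) I) := by
      intro x hx y hy
      rcases hx with rfl | hx <;> rcases hy with rfl | hy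
      · exact G.irrefl
      · exact fun h => hc y hy h.symm
      · exact fun h => hc x hx h
      · exact hind x hx y hy
    have := hmax _ hJ (Set.subset_insert _ _)
    exact hcon i (this ▸ Set.mem_insert (f i) I)
  choose n hnI hn using hnex
  have hII : ∀ i j : ZMod 5, ¬ G.Adj (n i) (n j) := fun i j => hind _ (hnI i) _ (hnI j)
  have hnf : ∀ i j : ZMod 5, n i ≠ f j := fun i j hh => hcon j (hh ▸ hnI i)
  have hfn : ∀ i j : ZMod 5, f i ≠ n j := fun i j hh => (hnf j i hh.symm).elim
  -- n i is not adjacent to the cycle-neighbours of f i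
  have t1 : ∀ i : ZMod 5, ¬ G.Adj (n i) (f (i+1)) := by
    intro i h
    exact tri _ _ _ (hn i) h (fadj i)
  have t4 : ∀ i : ZMod 5, ¬ G.Adj (n i) (f (i+4)) := by
    intro i h
    have h4 : G.Adj (f (i+4)) (f i) := by
      have h5 := fadj (i+4)
      rwa [ar1 i] at h5
    exact tri _ _ _ h (hn i) h4
  -- n i is adjacent to at most one of f(i+2), f(i+3)
  have step1 : ∀ i : ZMod 5, G.Adj (n i) (f (i+2)) → ¬ G.Adj (n i) (f (i+3)) := by
    intro i hx hy
    have h23 : G.Adj (f (i+2)) (f (i+3)) := by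
      have h5 := fadj (i+2)
      rwa [ar2 i] at h5
    exact tri _ _ _ hx hy h23
  -- key dichotomy for each antipodal pair
  have step2 : ∀ i : ZMod 5, G.Adj (n i) (f (i+2)) ∨ G.Adj (n (i+2)) (f i) := by
    intro i
    by_contra hc
    push_neg at hc
    obtain ⟨hx, hy⟩ := hc
    refine hK1plus2K2 (build_K1plus2K2 G (n (i+1)) (n i) (f i) (n (i+2)) (f (i+2))
      (hn i) (hn (i+2)) ?_ (hnf _ _) ?_ (hnf _ _) ?_ (hnf _ _) (hfn _ _) ?_
      (hII _ _) ?_ (hII _ _) ?_ (hII _ _) hx (fun h => hy h.symm) (fnadj i))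
    · intro e
      exact t1 i (e ▸ hn (i+1))
    · intro e
      have h' : G.Adj (n (i+2)) (f (i+1)) := e ▸ hn (i+1)
      refine t4 (i+2) ?_
      rwa [ar3 i]
    · intro e
      exact hx (e ▸ hn (i+2))
    · intro e
      exact arne i (f.injective e)
    · -- ¬ Adj (n (i+1)) (f i)
      intro h'
      refine t4 (i+1) ?_
      rwa [ar4 i]
    · -- ¬ Adj (n (i+1)) (f (i+2))
      intro h'
      refine t1 (i+1) ?_
      rwa [ar5 i]
  -- chain the dichotomy around the cycle
  by_cases hX0 : G.Adj (n 0) (f 2)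
  · -- all "X": n i adj f (i+2)
    have nY0 : ¬ G.Adj (n 0) (f 3) := step1 0 hX0
    have hX3 : G.Adj (n 3) (f 0) := by
      rcases step2 3 with h | h
      · rwa [show ((3:ZMod 5) + 2) = 0 from by decide] at h
      · rw [show ((3:ZMod 5) + 2) = 0 from by decide] at h
        exact absurd h nY0
    have nY3 : ¬ G.Adj (n 3) (f 1) := by
      have h5 := step1 3
      rw [show ((3:ZMod 5) + 2) = 0 from by decide,
          show ((3:ZMod 5) + 3) = 1 from by decide] at h5
      exact h5 hX3
    have hX1 : G.Adj (n 1) (f 3) := by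
      rcases step2 1 with h | h
      · rwa [show ((1:ZMod 5) + 2) = 3 from by decide] at h
      · rw [show ((1:ZMod 5) + 2) = 3 from by decide] at h
        exact absurd h nY3
    have nY1 : ¬ G.Adj (n 1) (f 4) := by
      have h5 := step1 1
      rw [show ((1:ZMod 5) + 2) = 3 from by decide,
          show ((1:ZMod 5) + 3) = 4 from by decide] at h5
      exact h5 hX1
    have hX4 : G.Adj (n 4) (f 1) := by
      rcases step2 4 with h | h
      · rwa [show ((4:ZMod 5) + 2) = 1 from by decide] at h
      · rw [show ((4:ZMod 5) + 2) = 1 from by decide] at h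
        exact absurd h nY1
    -- build K1+2K2 : d = n 0, a = n 3, p = f 3, b = n 4, q = f 1
    refine hK1plus2K2 (build_K1plus2K2 G (n 0) (n 3) (f 3) (n 4) (f 1)
      (hn 3) hX4 ?_ (hnf _ _) ?_ (hnf _ _) ?_ (hnf _ _) (hfn _ _) ?_
      (hII _ _) nY0 (hII _ _) ?_ (hII _ _) nY3 ?_ ?_)
    · intro e; exact nY0 (e ▸ hn 3)
    · intro e
      have h' : G.Adj (n 0) (f 4) := e ▸ hn 4
      have h4 := t4 0
      rw [show ((0:ZMod 5) + 4) = 4 from by decide] at h4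
      exact h4 h'
    · intro e
      have h' : G.Adj (n 3) (f 4) := e ▸ hn 4
      have h4 := t1 3
      rw [show ((3:ZMod 5) + 1) = 4 from by decide] at h4
      exact h4 h'
    · intro e
      exact (show (3:ZMod 5) ≠ 1 from by decide) (f.injective e)
    · -- ¬ Adj (n 0) (f 1)
      have h4 := t1 0
      rwa [show ((0:ZMod 5) + 1) = 1 from by decide] at h4
    · -- ¬ Adj (f 3) (n 4)
      intro h'
      have h4 := t4 4
      rw [show ((4:ZMod 5) + 4) = 3 from by decide] at h4
      exact h4 h'.symm
    · -- ¬ Adj (f 3) (f 1)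
      intro h'
      have h4 := fnadj 1
      rw [show ((1:ZMod 5) + 2) = 3 from by decide] at h4
      exact h4 h'.symm
  · -- all "Y": n i adj f (i+3)
    have hY2 : G.Adj (n 2) (f 0) := by
      rcases step2 0 with h | h
      · rw [show ((0:ZMod 5) + 2) = 2 from by decide] at h
        exact absurd h hX0
      · rwa [show ((0:ZMod 5) + 2) = 2 from by decide] at h
    have nX2 : ¬ G.Adj (n 2) (f 4) := by
      intro h
      have h5 := step1 2
      rw [show ((2:ZMod 5) + 2) = 4 from by decide,
          show ((2:ZMod 5) + 3) = 0 from by decide] at h5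
      exact h5 h hY2
    have hY4 : G.Adj (n 4) (f 2) := by
      rcases step2 2 with h | h
      · rw [show ((2:ZMod 5) + 2) = 4 from by decide] at h
        exact absurd h nX2
      · rwa [show ((2:ZMod 5) + 2) = 4 from by decide] at h
    have nX4 : ¬ G.Adj (n 4) (f 1) := by
      intro h
      have h5 := step1 4
      rw [show ((4:ZMod 5) + 2) = 1 from by decide,
          show ((4:ZMod 5) + 3) = 2 from by decide] at h5
      exact h5 h hY4
    have hY1 : G.Adj (n 1) (f 4) := by
      rcases step2 4 with h | h
      · rw [show ((4:ZMod 5) + 2) = 1 from by decide] at h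
        exact absurd h nX4
      · rwa [show ((4:ZMod 5) + 2) = 1 from by decide] at h
    have nX1 : ¬ G.Adj (n 1) (f 3) := by
      intro h
      have h5 := step1 1
      rw [show ((1:ZMod 5) + 2) = 3 from by decide,
          show ((1:ZMod 5) + 3) = 4 from by decide] at h5
      exact h5 h hY1
    -- build K1+2K2 : d = n 0, a = n 2, p = f 2, b = n 1, q = f 4
    refine hK1plus2K2 (build_K1plus2K2 G (n 0) (n 2) (f 2) (n 1) (f 4)
      (hn 2) hY1 ?_ (hnf _ _) ?_ (hnf _ _) ?_ (hnf _ _) (hfn _ _) ?_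
      (hII _ _) hX0 (hII _ _) ?_ (hII _ _) nX2 ?_ ?_)
    · intro e; exact hX0 (e ▸ hn 2)
    · intro e
      have h' : G.Adj (n 0) (f 1) := e ▸ hn 1
      have h4 := t1 0
      rw [show ((0:ZMod 5) + 1) = 1 from by decide] at h4
      exact h4 h'
    · intro e
      have h' : G.Adj (n 2) (f 1) := e ▸ hn 1
      have h4 := t4 2
      rw [show ((2:ZMod 5) + 4) = 1 from by decide] at h4
      exact h4 h'
    · intro e
      exact (show (2:ZMod 5) ≠ 4 from by decide) (f.injective e)
    · -- ¬ Adj (n 0) (f 4)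
      have h4 := t4 0
      rwa [show ((0:ZMod 5) + 4) = 4 from by decide] at h4
    · -- ¬ Adj (f 2) (n 1)
      intro h'
      have h4 := t1 1
      rw [show ((1:ZMod 5) + 1) = 2 from by decide] at h4
      exact h4 h'.symm
    · -- ¬ Adj (f 2) (f 4)
      intro h'
      have h4 := fnadj 2
      rw [show ((2:ZMod 5) + 2) = 4 from by decide] at h4
      exact h4 h'
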